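/- Let G = SU(r) with r ≥ 3, let C_1 be the conjugacy class of exp(2πi·diag(ω_1/2)) and C_2 that of exp(2πi·diag(ω_2/2)), where ω_1, ω_2 are the first two fundamental coweight vertices. Then C_2 ⊆ C_1 · C_1; that is, there exist g_1, g_2 ∈ C_1 with g_1 g_2 ∈ C_2. -/

import Mathlib

open Matrix

/-- The special unitary group SU(r), realized as the subgroup of the unitary group
consisting of matrices of determinant one. -/
def SU (r : ℕ) : Subgroup (Matrix.unitaryGroup (Fin r) ℂ) where
  carrier := {g | (g : Matrix (Fin r) (Fin r) ℂ).det = 1}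
  one_mem' := by simp
  mul_mem' := by
    intro a b ha hb
    simp only [Set.mem_setOf_eq] at *
    have h : ((a * b : Matrix.unitaryGroup (Fin r) ℂ) : Matrix (Fin r) (Fin r) ℂ)
        = (a : Matrix (Fin r) (Fin r) ℂ) * b := rfl
    rw [h, Matrix.det_mul, ha, hb, one_mul]
  inv_mem' := by
    intro a ha
    simp only [Set.mem_setOf_eq] at *
    have h1 : ((a⁻¹ : Matrix.unitaryGroup (Fin r) ℂ) : Matrix (Fin r) (Fin r) ℂ) *
        (a : Matrix (Fin r) (Fin r) ℂ) = 1 := by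
      have h : ((a⁻¹ * a : Matrix.unitaryGroup (Fin r) ℂ) : Matrix (Fin r) (Fin r) ℂ)
          = ((a⁻¹ : Matrix.unitaryGroup (Fin r) ℂ) : Matrix (Fin r) (Fin r) ℂ) *
            (a : Matrix (Fin r) (Fin r) ℂ) := rfl
      rw [← h, inv_mul_cancel a]; rfl
    have h2 := congrArg Matrix.det h1
    rw [Matrix.det_mul, ha, mul_one, Matrix.det_one] at h2
    exact h2

/-- The matrix of an element of `SU r`. -/
def SU.mat {r : ℕ} (g : SU r) : Matrix (Fin r) (Fin r) ℂ :=
  ((g : Matrix.unitaryGroup (Fin r) ℂ) : Matrix (Fin r) (Fin r) ℂ)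


/-- A diagonal matrix with entries `exp(π i f j)` (f real) is unitary. -/
lemma aux_diag_unitary {r : ℕ} (f : Fin r → ℝ) :
    Matrix.diagonal (fun j => Complex.exp (Real.pi * Complex.I * f j)) ∈
      Matrix.unitaryGroup (Fin r) ℂ := by
  have hstar : ∀ j, star (Complex.exp (Real.pi * Complex.I * f j))
      = Complex.exp (-(Real.pi * Complex.I * f j)) := by
    intro j
    rw [RCLike.star_def, ← Complex.exp_conj]
    congr 1
    simp only [_root_.map_mul, Complex.conj_ofReal, Complex.conj_I]
    ring
  rw [Matrix.mem_unitaryGroup_iff, Matrix.star_eq_conjTranspose,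
    Matrix.diagonal_conjTranspose, Matrix.diagonal_mul_diagonal, ← Matrix.diagonal_one]
  have : (fun i => Complex.exp (Real.pi * Complex.I * f i) *
      star (Complex.exp (Real.pi * Complex.I * f i))) = fun _ : Fin r => (1 : ℂ) := by
    funext i
    rw [hstar i, ← Complex.exp_add, add_neg_cancel, Complex.exp_zero]
  exact congrArg Matrix.diagonal this


/-- For SU(r), r ≥ 3, with C_1 the conjugacy class of exp(2πi·diag(ω_1/2))
and C_2 that of exp(2πi·diag(ω_2/2)), one has C_2 ⊆ C_1·C_1: there exist g_1, g_2 ∈ C_1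
with g_1 g_2 ∈ C_2. -/
theorem class_two_in_square_of_class_one (r : ℕ) (hr : 3 ≤ r)
    (ω₁ ω₂ : Fin r → ℝ)
    (hω₁ : ∀ j : Fin r, ω₁ j = if (j : ℕ) = 0 then ((r : ℝ) - 1) / r else -(1 / r))
    (hω₂ : ∀ j : Fin r, ω₂ j = if (j : ℕ) < 2 then ((r : ℝ) - 2) / r else -(2 / r))
    (C₁ C₂ : Set (SU r))
    (hC₁ : C₁ = {g : SU r | ∃ u : SU r, SU.mat g =
      SU.mat u * Matrix.diagonal (fun j => Complex.exp (Real.pi * Complex.I * ω₁ j)) *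
        SU.mat u⁻¹})
    (hC₂ : C₂ = {g : SU r | ∃ u : SU r, SU.mat g =
      SU.mat u * Matrix.diagonal (fun j => Complex.exp (Real.pi * Complex.I * ω₂ j)) *
        SU.mat u⁻¹}) :
    ∃ g₁ ∈ C₁, ∃ g₂ ∈ C₁, g₁ * g₂ ∈ C₂ := by
  haveI : NeZero r := ⟨by omega⟩
  have hrR : (r : ℝ) ≠ 0 := by positivity
  have h0v : ((0 : Fin r) : ℕ) = 0 := rfl
  have h1v : ((1 : Fin r) : ℕ) = 1 := by
    have : (1 : ℕ) % r = 1 := Nat.mod_eq_of_lt (by omega)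
    simp [Fin.val_one', this]
  have h01 : (0 : Fin r) ≠ 1 := by
    intro h; rw [Fin.ext_iff, h0v, h1v] at h; omega
  set d : Fin r → ℂ := fun j => Complex.exp (Real.pi * Complex.I * ω₁ j) with hd
  set σ : Equiv.Perm (Fin r) := Equiv.swap 0 1 with hσ
  -- key coweight identity
  have hωσ : ∀ j, ω₁ j + ω₁ (σ j) = ω₂ j := by
    intro j
    by_cases hj0 : j = 0
    · subst hj0
      rw [show σ 0 = 1 from Equiv.swap_apply_left 0 1, hω₁, hω₁, hω₂, h0v, h1v]
      norm_num
      field_simp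
      ring
    · by_cases hj1 : j = 1
      · subst hj1
        rw [show σ 1 = 0 from Equiv.swap_apply_right 0 1, hω₁, hω₁, hω₂, h0v, h1v]
        norm_num
        field_simp
        ring
      · rw [show σ j = j from Equiv.swap_apply_of_ne_of_ne hj0 hj1, hω₁, hω₂]
        have hv0 : (j : ℕ) ≠ 0 := by
          intro h; exact hj0 (Fin.ext (by rw [h, h0v]))
        have hv1 : (j : ℕ) ≠ 1 := by
          intro h; exact hj1 (Fin.ext (by rw [h, h1v]))
        rw [if_neg hv0, if_neg (by omega : ¬ (j : ℕ) < 2)]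
        ring
  have hdmul : ∀ j, d j * d (σ j) = Complex.exp (Real.pi * Complex.I * ω₂ j) := by
    intro j
    rw [hd]
    rw [← Complex.exp_add]
    congr 1
    rw [← hωσ j]
    push_cast
    ring
  -- sum of ω₁ is zero
  have hsum : ∑ j, ω₁ j = 0 := by
    have : ∀ j : Fin r, ω₁ j = -(1 / (r:ℝ)) + (if j = 0 then 1 else 0) := by
      intro j
      rw [hω₁]
      by_cases hj : j = 0
      · subst hj; rw [if_pos h0v, if_pos rfl]; field_simp; ring
      · rw [if_neg (fun h => hj (Fin.ext (by rw [h, h0v]))), if_neg hj]; ring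
    rw [Finset.sum_congr rfl (fun j _ => this j), Finset.sum_add_distrib,
      Finset.sum_const, Finset.sum_ite_eq' Finset.univ (0 : Fin r) (fun _ => (1:ℝ)),
      if_pos (Finset.mem_univ _), Finset.card_univ, Fintype.card_fin]
    field_simp
    rw [nsmul_eq_mul, mul_neg, mul_one_div_cancel hrR]; ring
  have hprod : ∏ j, d j = 1 := by
    rw [hd, ← Complex.exp_sum]
    have : ∑ j, (Real.pi * Complex.I * (ω₁ j : ℂ)) = 0 := by
      rw [← Finset.mul_sum]
      have : ∑ j, ((ω₁ j : ℝ) : ℂ) = ((∑ j, ω₁ j : ℝ) : ℂ) := by push_cast; ring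
      rw [this, hsum]
      simp
    rw [this, Complex.exp_zero]
  -- g₁
  have hdet₁ : (Matrix.diagonal d).det = 1 := by rw [Matrix.det_diagonal]; exact hprod
  have hdet₂ : (Matrix.diagonal (fun j => d (σ j))).det = 1 := by
    rw [Matrix.det_diagonal, Equiv.prod_comp σ d]; exact hprod
  have hu₂ : Matrix.diagonal (fun j => d (σ j)) ∈ Matrix.unitaryGroup (Fin r) ℂ :=
    aux_diag_unitary (fun j => ω₁ (σ j))
  let g₁ : SU r := ⟨⟨Matrix.diagonal d, aux_diag_unitary ω₁⟩, hdet₁⟩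
  let g₂ : SU r := ⟨⟨Matrix.diagonal (fun j => d (σ j)), hu₂⟩, hdet₂⟩
  have hmat₁ : SU.mat g₁ = Matrix.diagonal d := rfl
  have hmat₂ : SU.mat g₂ = Matrix.diagonal (fun j => d (σ j)) := rfl
  have hmatone : SU.mat (1 : SU r) = 1 := rfl
  have hmatmul : ∀ a b : SU r, SU.mat (a * b) = SU.mat a * SU.mat b := fun _ _ => rfl
  -- the signed permutation matrix
  set s : Fin r → ℂ := fun i => if i = 0 then -1 else 1 with hs
  set U : Matrix (Fin r) (Fin r) ℂ := Matrix.diagonal s * σ.permMatrix ℂ with hU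
  have hPapply : ∀ i j, (σ.permMatrix ℂ) i j = if σ i = j then 1 else 0 := by
    intro i j
    rw [Equiv.Perm.permMatrix, PEquiv.toMatrix_toPEquiv_eq, Matrix.submatrix_apply, id_eq, Matrix.one_apply]
  have hUapply : ∀ i j, U i j = s i * (if σ i = j then 1 else 0) := by
    intro i j
    rw [hU, Matrix.diagonal_mul, hPapply]
  have hUdet : U.det = 1 := by
    rw [hU, Matrix.det_mul, Matrix.det_diagonal, Matrix.det_permutation,
      Equiv.Perm.sign_swap h01]
    have : ∏ i, s i = -1 := by
      rw [hs]
      rw [Finset.prod_ite_eq' Finset.univ (0 : Fin r) (fun _ => (-1:ℂ))]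
      simp
    rw [this]
    simp
  have hPunit : σ.permMatrix ℂ ∈ Matrix.unitaryGroup (Fin r) ℂ := by
    rw [Matrix.mem_unitaryGroup_iff]
    ext i j
    rw [Matrix.mul_apply, Matrix.one_apply]
    have key : ∀ k, (σ.permMatrix ℂ) i k * (star (σ.permMatrix ℂ)) k j
        = if σ i = k then (if σ j = k then (1:ℂ) else 0) else 0 := by
      intro k
      rw [Matrix.star_eq_conjTranspose, Matrix.conjTranspose_apply, hPapply, hPapply]
      by_cases h1 : σ i = k <;> by_cases h2 : σ j = k <;> simp [h1, h2]
    rw [Finset.sum_congr rfl (fun k _ => key k),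
      Finset.sum_ite_eq Finset.univ (σ i) (fun k => if σ j = k then (1:ℂ) else 0),
      if_pos (Finset.mem_univ _)]
    by_cases h : i = j
    · subst h; simp
    · rw [if_neg h, if_neg fun hh => h (σ.injective hh).symm]
  have hSunit : Matrix.diagonal s ∈ Matrix.unitaryGroup (Fin r) ℂ := by
    rw [Matrix.mem_unitaryGroup_iff]
    rw [show (star (Matrix.diagonal s) : Matrix (Fin r) (Fin r) ℂ) = _ᴴ from rfl,
      Matrix.diagonal_conjTranspose, Matrix.diagonal_mul_diagonal]
    have : (fun i => s i * star s i) = fun _ => (1:ℂ) := by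
      funext i
      rw [hs]
      by_cases h : i = 0 <;> simp [h]
    rw [this, Matrix.diagonal_one]
  have hUunit : U ∈ Matrix.unitaryGroup (Fin r) ℂ := mul_mem hSunit hPunit
  let u : SU r := ⟨⟨U, hUunit⟩, hUdet⟩
  have hmatu : SU.mat u = U := rfl
  have hcomm : U * Matrix.diagonal d = Matrix.diagonal (fun j => d (σ j)) * U := by
    ext i j
    rw [Matrix.mul_diagonal, Matrix.diagonal_mul, hUapply]
    by_cases h : σ i = j
    · rw [if_pos h, ← h]; ring
    · rw [if_neg h]; ring
  have hUU : SU.mat u * SU.mat u⁻¹ = 1 := by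
    rw [← hmatmul, mul_inv_cancel, hmatone]
  refine ⟨g₁, ?_, g₂, ?_, ?_⟩
  · rw [hC₁]
    exact ⟨1, by rw [hmat₁, inv_one, hmatone]; simp⟩
  · rw [hC₁]
    refine ⟨u, ?_⟩
    rw [hmat₂, hmatu, hcomm, mul_assoc, ← hmatu, hUU, mul_one]
  · rw [hC₂]
    refine ⟨1, ?_⟩
    rw [hmatmul, hmat₁, hmat₂, inv_one, hmatone, Matrix.diagonal_mul_diagonal]
    have : (fun j => d j * d (σ j)) =
        fun j => Complex.exp (Real.pi * Complex.I * ω₂ j) := funext hdmul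
    rw [this]
    simp
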